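/- Let $f:[0,\infty)\to(0,\infty)$ be a $C^1$ log-concave increasing function, and let $h$ be the inverse of the map $\rho\mapsto\int_0^{h}f(t)\,dt$, i.e. $\int_0^{h(\rho)}f(t)\,dt=\rho$. Then $f\circ h$ is concave; consequently, for all $a,b$ in the domain and $\theta\in[0,1]$, $f\circ h((1-\theta)a+\theta b)\ge(1-\theta)f\circ h(a)+\theta f\circ h(b)$. -/

import Mathlib

open Real MeasureTheory Set

private lemma key_slope (f : ℝ → ℝ)
    (hpos : ∀ t ∈ Icc (0:ℝ) 1, 0 < f t)
    (hC1 : ContDiffOn ℝ 1 f (Icc (0:ℝ) 1))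
    (hlc : ∀ t₁ ∈ Icc (0:ℝ) 1, ∀ t₂ ∈ Icc (0:ℝ) 1, ∀ θ ∈ Icc (0:ℝ) 1,
      f t₁ ^ θ * f t₂ ^ (1 - θ) ≤ f (θ * t₁ + (1 - θ) * t₂))
    {x y z : ℝ} (hx : x ∈ Icc (0:ℝ) 1) (hz : z ∈ Icc (0:ℝ) 1)
    (hxy : x ≤ y) (hyz : y ≤ z) :
    (f z - f y) * (∫ t in x..y, f t) ≤ (f y - f x) * (∫ t in y..z, f t) := by
  have hy : y ∈ Icc (0:ℝ) 1 := ⟨le_trans hx.1 hxy, le_trans hyz hz.2⟩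
  have hud : UniqueDiffOn ℝ (Icc (0:ℝ) 1) := uniqueDiffOn_Icc one_pos
  have fdiff : DifferentiableOn ℝ f (Icc (0:ℝ) 1) := hC1.differentiableOn one_ne_zero
  have fcont : ContinuousOn f (Icc (0:ℝ) 1) := hC1.continuousOn
  set d : ℝ → ℝ := derivWithin f (Icc (0:ℝ) 1) with hd
  have dcont : ContinuousOn d (Icc (0:ℝ) 1) := hC1.continuousOn_derivWithin hud le_rfl
  -- log f is concave
  have hψ : ConcaveOn ℝ (Icc (0:ℝ) 1) (fun t => Real.log (f t)) := by
    refine ⟨convex_Icc 0 1, fun u hu v hv p q hp hq hpq => ?_⟩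
    have hq' : q = 1 - p := by linarith
    subst hq'
    have h0 := hlc u hu v hv p ⟨hp, by linarith⟩
    have hlog : Real.log (f u ^ p * f v ^ (1-p)) ≤ Real.log (f (p * u + (1-p) * v)) :=
      Real.log_le_log (mul_pos (Real.rpow_pos_of_pos (hpos u hu) _) (Real.rpow_pos_of_pos (hpos v hv) _)) h0
    rw [Real.log_mul (ne_of_gt (Real.rpow_pos_of_pos (hpos u hu) _))
        (ne_of_gt (Real.rpow_pos_of_pos (hpos v hv) _)),
      Real.log_rpow (hpos u hu), Real.log_rpow (hpos v hv)] at hlog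
    simpa [smul_eq_mul] using hlog
  have hψd : DifferentiableOn ℝ (fun t => Real.log (f t)) (Icc (0:ℝ) 1) :=
    fun u hu => (fdiff u hu).log (ne_of_gt (hpos u hu))
  have hψderiv : ∀ u ∈ Icc (0:ℝ) 1,
      derivWithin (fun t => Real.log (f t)) (Icc (0:ℝ) 1) u = d u / f u := fun u hu =>
    (((fdiff u hu).hasDerivWithinAt).log (ne_of_gt (hpos u hu))).derivWithin (hud u hu)
  have hanti := hψ.antitoneOn_derivWithin hψd
  have slope : ∀ u ∈ Icc (0:ℝ) 1, ∀ v ∈ Icc (0:ℝ) 1, u ≤ v → d v * f u ≤ d u * f v := by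
    intro u hu v hv huv
    have := hanti hu hv huv
    rw [hψderiv u hu, hψderiv v hv] at this
    exact (div_le_div_iff₀ (hpos v hv) (hpos u hu)).mp this
  -- FTC
  have intf : ∀ u v : ℝ, u ∈ Icc (0:ℝ) 1 → v ∈ Icc (0:ℝ) 1 → u ≤ v →
      IntervalIntegrable f volume u v := by
    intro u v hu hv huv
    apply ContinuousOn.intervalIntegrable
    rw [uIcc_of_le huv]
    exact fcont.mono (Icc_subset_Icc hu.1 hv.2)
  have intd : ∀ u v : ℝ, u ∈ Icc (0:ℝ) 1 → v ∈ Icc (0:ℝ) 1 → u ≤ v →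
      IntervalIntegrable d volume u v := by
    intro u v hu hv huv
    apply ContinuousOn.intervalIntegrable
    rw [uIcc_of_le huv]
    exact dcont.mono (Icc_subset_Icc hu.1 hv.2)
  have ftc : ∀ u v : ℝ, u ∈ Icc (0:ℝ) 1 → v ∈ Icc (0:ℝ) 1 → u ≤ v →
      (∫ t in u..v, d t) = f v - f u := by
    intro u v hu hv huv
    refine intervalIntegral.integral_eq_sub_of_hasDeriv_right_of_le huv
      (fcont.mono (Icc_subset_Icc hu.1 hv.2)) (fun t ht => ?_) (intd u v hu hv huv)
    have ht01 : t ∈ Ioo (0:ℝ) 1 := ⟨lt_of_le_of_lt hu.1 ht.1, lt_of_lt_of_le ht.2 hv.2⟩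
    have htS : t ∈ Icc (0:ℝ) 1 := ⟨ht01.1.le, ht01.2.le⟩
    exact (((fdiff t htS).hasDerivWithinAt).hasDerivAt
      (Icc_mem_nhds ht01.1 ht01.2)).hasDerivWithinAt
  set c : ℝ := d y / f y with hc
  have h1 : ∀ u ∈ Icc x y, c * f u ≤ d u := by
    intro u hu
    have huS : u ∈ Icc (0:ℝ) 1 := ⟨le_trans hx.1 hu.1, le_trans hu.2 hy.2⟩
    have := slope u huS y hy hu.2
    rw [hc, div_mul_eq_mul_div, div_le_iff₀ (hpos y hy)]
    linarith
  have h2 : ∀ v ∈ Icc y z, d v ≤ c * f v := by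
    intro v hv
    have hvS : v ∈ Icc (0:ℝ) 1 := ⟨le_trans hy.1 hv.1, le_trans hv.2 hz.2⟩
    have := slope y hy v hvS hv.1
    rw [hc, div_mul_eq_mul_div, le_div_iff₀ (hpos y hy)]
    linarith
  have e1 : c * (∫ t in x..y, f t) ≤ f y - f x := by
    rw [← ftc x y hx hy hxy, ← intervalIntegral.integral_const_mul]
    exact intervalIntegral.integral_mono_on hxy ((intf x y hx hy hxy).const_mul c)
      (intd x y hx hy hxy) h1
  have e2 : f z - f y ≤ c * (∫ t in y..z, f t) := by
    rw [← ftc y z hy hz hyz, ← intervalIntegral.integral_const_mul]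
    exact intervalIntegral.integral_mono_on hyz (intd y z hy hz hyz)
      ((intf y z hy hz hyz).const_mul c) h2
  have hI1 : 0 ≤ (∫ t in x..y, f t) :=
    intervalIntegral.integral_nonneg hxy
      (fun t ht => (hpos t ⟨le_trans hx.1 ht.1, le_trans ht.2 hy.2⟩).le)
  have hI2 : 0 ≤ (∫ t in y..z, f t) :=
    intervalIntegral.integral_nonneg hyz
      (fun t ht => (hpos t ⟨le_trans hy.1 ht.1, le_trans ht.2 hz.2⟩).le)
  nlinarith [mul_le_mul_of_nonneg_right e1 hI2, mul_le_mul_of_nonneg_right e2 hI1]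

theorem stmt0 (f h : ℝ → ℝ)
    (hpos : ∀ t ∈ Icc (0:ℝ) 1, 0 < f t)
    (hmono : MonotoneOn f (Icc (0:ℝ) 1))
    (hC1 : ContDiffOn ℝ 1 f (Icc (0:ℝ) 1))
    (hlc : ∀ t₁ ∈ Icc (0:ℝ) 1, ∀ t₂ ∈ Icc (0:ℝ) 1, ∀ θ ∈ Icc (0:ℝ) 1,
      f t₁ ^ θ * f t₂ ^ (1 - θ) ≤ f (θ * t₁ + (1 - θ) * t₂))
    (hh : ∀ ρ ∈ Icc (0:ℝ) (∫ t in (0:ℝ)..1, f t),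
      h ρ ∈ Icc (0:ℝ) 1 ∧ (∫ t in (0:ℝ)..(h ρ), f t) = ρ) :
    ∀ a ∈ Icc (0:ℝ) (∫ t in (0:ℝ)..1, f t),
    ∀ b ∈ Icc (0:ℝ) (∫ t in (0:ℝ)..1, f t),
    ∀ θ ∈ Icc (0:ℝ) 1,
      (1 - θ) * f (h a) + θ * f (h b) ≤ f (h ((1 - θ) * a + θ * b)) := by
  set M : ℝ := ∫ t in (0:ℝ)..1, f t with hM
  have fcont : ContinuousOn f (Icc (0:ℝ) 1) := hC1.continuousOn
  have intf : ∀ u v : ℝ, u ∈ Icc (0:ℝ) 1 → v ∈ Icc (0:ℝ) 1 → u ≤ v →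
      IntervalIntegrable f volume u v := by
    intro u v hu hv huv
    apply ContinuousOn.intervalIntegrable
    rw [uIcc_of_le huv]
    exact fcont.mono (Icc_subset_Icc hu.1 hv.2)
  -- strict monotonicity of F u = ∫ 0..u f
  have Fdiff : ∀ u v : ℝ, u ∈ Icc (0:ℝ) 1 → v ∈ Icc (0:ℝ) 1 → u ≤ v →
      (∫ t in (0:ℝ)..v, f t) - (∫ t in (0:ℝ)..u, f t) = ∫ t in u..v, f t := by
    intro u v hu hv huv
    have := intervalIntegral.integral_add_adjacent_intervals
      (intf 0 u (by simp) hu hu.1) (intf u v hu hv huv)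
    linarith
  have Fmono : ∀ u v : ℝ, u ∈ Icc (0:ℝ) 1 → v ∈ Icc (0:ℝ) 1 → u < v →
      (∫ t in (0:ℝ)..u, f t) < (∫ t in (0:ℝ)..v, f t) := by
    intro u v hu hv huv
    have hpos' : 0 < ∫ t in u..v, f t :=
      intervalIntegral.intervalIntegral_pos_of_pos_on (intf u v hu hv huv.le)
        (fun t ht => hpos t ⟨le_trans hu.1 ht.1.le, le_trans ht.2.le hv.2⟩) huv
    have := Fdiff u v hu hv huv.le
    linarith
  -- main claim for a ≤ b
  have main : ∀ a ∈ Icc (0:ℝ) M, ∀ b ∈ Icc (0:ℝ) M, a ≤ b → ∀ θ ∈ Icc (0:ℝ) 1,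
      (1 - θ) * f (h a) + θ * f (h b) ≤ f (h ((1 - θ) * a + θ * b)) := by
    intro a ha b hb hab θ hθ
    rcases eq_or_lt_of_le hab with rfl | hab'
    · have harg : (1 - θ) * a + θ * a = a := by ring
      rw [harg]; nlinarith
    set ρ : ℝ := (1 - θ) * a + θ * b with hρ
    have hρa : a ≤ ρ := by nlinarith [hθ.1, hθ.2]
    have hρb : ρ ≤ b := by nlinarith [hθ.1, hθ.2]
    have hρmem : ρ ∈ Icc (0:ℝ) M := ⟨le_trans ha.1 hρa, le_trans hρb hb.2⟩
    obtain ⟨hxS, hFx⟩ := hh a ha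
    obtain ⟨hyS, hFy⟩ := hh ρ hρmem
    obtain ⟨hzS, hFz⟩ := hh b hb
    have hxy : h a ≤ h ρ := by
      by_contra hcon
      push_neg at hcon
      have := Fmono (h ρ) (h a) hyS hxS hcon
      rw [hFx, hFy] at this; linarith
    have hyz : h ρ ≤ h b := by
      by_contra hcon
      push_neg at hcon
      have := Fmono (h b) (h ρ) hzS hyS hcon
      rw [hFy, hFz] at this; linarith
    have hI1 : (∫ t in (h a)..(h ρ), f t) = ρ - a := by
      have := Fdiff (h a) (h ρ) hxS hyS hxy
      rw [hFx, hFy] at this; linarith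
    have hI2 : (∫ t in (h ρ)..(h b), f t) = b - ρ := by
      have := Fdiff (h ρ) (h b) hyS hzS hyz
      rw [hFy, hFz] at this; linarith
    have key := key_slope f hpos hC1 hlc hxS hzS hxy hyz
    rw [hI1, hI2] at key
    have hρa' : ρ - a = θ * (b - a) := by rw [hρ]; ring
    have hρb' : b - ρ = (1 - θ) * (b - a) := by rw [hρ]; ring
    rw [hρa', hρb'] at key
    -- key : (f (h b) - f (h ρ)) * (θ * (b - a)) ≤ (f (h ρ) - f (h a)) * ((1-θ) * (b - a))
    have hba : 0 < b - a := by linarith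
    nlinarith [key, hba]
  intro a ha b hb θ hθ
  rcases le_total a b with hab | hba
  · exact main a ha b hb hab θ hθ
  · have := main b hb a ha hba (1 - θ) ⟨by linarith [hθ.2], by linarith [hθ.1]⟩
    have harg : (1 - (1 - θ)) * b + (1 - θ) * a = (1 - θ) * a + θ * b := by ring
    rw [harg] at this
    linarith
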